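/- Let c be a nice χ-coloring of a connected graph G with level partition (V_1,…,V_k) of D_c. Then every vertex of level at least χ (i.e., lying in V_i for some i ≥ χ) is the beginning of a directed path on χ vertices in D_c; hence the set B_c of vertices having no colorful path satisfies B_c ⊆ V_2 ∪ V_3 ∪ … ∪ V_{χ-1}. -/

import Mathlib

/-- A directed cycle: a closed walk of positive length in the digraph `D`. -/
def HasDCycle {V : Type} (D : V → V → Prop) : Prop :=
  ∃ (x : V) (l : List V), List.Chain D x (l ++ [x])

/-- `x` lies in the `i`-th level of the level partition of the (acyclic)
digraph `D`: the longest directed path starting at `x` has `i` vertices. -/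
def InLevel {V : Type} (D : V → V → Prop) (x : V) (i : ℕ) : Prop :=
  (∃ l : List V, l.Chain' D ∧ l.head? = some x ∧ l.length = i) ∧
  ¬ (∃ l : List V, l.Chain' D ∧ l.head? = some x ∧ l.length = i + 1)

private lemma aux_nodup {V : Type} {D : V → V → Prop} (hacyc : ¬ HasDCycle D) :
    ∀ l : List V, l.Chain' D → l.Nodup := by
  intro l
  induction l with
  | nil => exact fun _ => List.nodup_nil
  | cons a t ih =>
    intro h
    have ht : t.Chain' D := (List.isChain_cons.1 h).2
    refine List.nodup_cons.2 ⟨fun hmem => ?_, ih ht⟩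
    obtain ⟨s, u, rfl⟩ := List.append_of_mem hmem
    apply hacyc
    refine ⟨a, s, ?_⟩
    have h2 : List.Chain' D ((a :: s) ++ (a :: u)) := by simpa using h
    unfold List.Chain' at h2; rw [List.isChain_append] at h2
    have h3 : List.Chain' D ((a :: s) ++ [a]) := by
      unfold List.Chain'; rw [List.isChain_append]
      refine ⟨h2.1, List.isChain_singleton a, ?_⟩
      intro x hx y hy
      simp only [List.head?_cons, Option.mem_def, Option.some.injEq] at hy
      subst hy
      exact h2.2.2 x hx a rfl
    have h4 : List.Chain' D (a :: (s ++ [a])) := by simpa using h3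
    exact h4

private lemma aux_get {V : Type} {χ : ℕ} {c : V → ZMod χ} {D : V → V → Prop}
    (hDc : ∀ a b, D a b → c b = c a + 1) {l : List V} (hl : l.Chain' D) :
    ∀ j (hj : j < l.length) (h0 : 0 < l.length),
      c (l.get ⟨j, hj⟩) = c (l.get ⟨0, h0⟩) + (j : ZMod χ) := by
  intro j
  induction j with
  | zero => intro hj h0; simp
  | succ k ih =>
    intro hj h0
    have hk : k < l.length := Nat.lt_of_succ_lt hj
    have hrel := (List.isChain_iff_getElem.1 hl) k (by omega)
    have hstep : c (l.get ⟨k + 1, hj⟩) = c (l.get ⟨k, hk⟩) + 1 := hDc _ _ hrel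
    have : l.get ⟨k + 1, hj⟩ = l.get ⟨k + 1, by omega⟩ := rfl
    rw [this, hstep, ih hk h0]
    push_cast
    ring

private lemma aux_last {V : Type} {χ : ℕ} {c : V → ZMod χ} {D : V → V → Prop}
    (hDc : ∀ a b, D a b → c b = c a + 1) :
    ∀ l : List V, l.Chain' D → ∀ x z : V, l.head? = some x → l.getLast? = some z →
      c z = c x + ((l.length - 1 : ℕ) : ZMod χ)
  | [], _, x, z => by simp
  | [a], _, x, z => by
    intro hx hz
    simp only [List.head?_cons, Option.some.injEq] at hx
    simp only [List.getLast?_singleton, Option.some.injEq] at hz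
    subst hx; subst hz; simp
  | a :: b :: t, hch, x, z => by
    intro hx hz
    obtain rfl : a = x := by simpa using hx
    have h1 : (b :: t).getLast? = some z := by
      rw [List.getLast?_cons_cons] at hz; exact hz
    have hrec := aux_last hDc (b :: t) (List.isChain_cons_cons.1 hch).2 b z rfl h1
    rw [hrec, hDc _ _ (List.isChain_cons_cons.1 hch).1]
    simp only [List.length_cons, Nat.add_sub_cancel]
    push_cast
    ring

private lemma aux_mapnodup {V : Type} {χ : ℕ} (hχ : 0 < χ) {c : V → ZMod χ} {D : V → V → Prop}
    (hDc : ∀ a b, D a b → c b = c a + 1) {l : List V} (hl : l.Chain' D) (hlen : l.length = χ) :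
    (l.map c).Nodup := by
  have h0 : 0 < l.length := by omega
  have hNZ : NeZero χ := ⟨hχ.ne'⟩
  rw [List.nodup_iff_injective_get]
  intro i j hij
  have hlm : (l.map c).length = l.length := List.length_map _
  have hi : (i : ℕ) < l.length := by omega
  have hj : (j : ℕ) < l.length := by omega
  have hgi : (l.map c).get i = c (l.get ⟨(i : ℕ), hi⟩) := by
    simp [List.get_eq_getElem]
  have hgj : (l.map c).get j = c (l.get ⟨(j : ℕ), hj⟩) := by
    simp [List.get_eq_getElem]
  rw [hgi, hgj, aux_get hDc hl _ hi h0, aux_get hDc hl _ hj h0] at hij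
  have hcast : ((i : ℕ) : ZMod χ) = ((j : ℕ) : ZMod χ) := by
    exact add_left_cancel hij
  have : ((i : ℕ) : ZMod χ).val = ((j : ℕ) : ZMod χ).val := by rw [hcast]
  rw [ZMod.val_cast_of_lt (by omega), ZMod.val_cast_of_lt (by omega)] at this
  exact Fin.ext (by omega)

private lemma aux_walk {V : Type} {G : SimpleGraph V} {R : V → V → Prop}
    (hR : ∀ a b, R a b → G.Adj a b) :
    ∀ (l : List V) (x : V), l.Chain' R → l.head? = some x →
      ∃ (y : V) (p : G.Walk x y), p.support = l := by
  intro l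
  induction l with
  | nil => intro x _ hh; simp at hh
  | cons a t ih =>
    intro x hch hh
    obtain rfl : a = x := by simpa using hh
    cases t with
    | nil => exact ⟨a, SimpleGraph.Walk.nil, by simp⟩
    | cons b t' =>
      have hab : R a b := (List.isChain_cons_cons.1 hch).1
      obtain ⟨y, p, hp⟩ := ih b (List.isChain_cons_cons.1 hch).2 rfl
      exact ⟨y, SimpleGraph.Walk.cons (hR _ _ hab) p, by simp [hp]⟩

open Classical in
private noncomputable def lev {V : Type} [Fintype V] (D : V → V → Prop) (x : V) : ℕ :=
  Nat.findGreatest (fun n => ∃ l : List V, l.Chain' D ∧ l.head? = some x ∧ l.length = n)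
    (Fintype.card V)

/-- In a nice coloring, every vertex of level at least `χ` starts a directed
path on `χ` vertices of `D_c`, hence every vertex with no colorful path lies
in a level `i` with `2 ≤ i ≤ χ - 1`. -/
theorem Bc_in_middle_levels {V : Type} [Fintype V] (G : SimpleGraph V)
    (hG : G.Connected) (χ : ℕ) (hχ : G.chromaticNumber = χ)
    (c : V → ZMod χ) (hc : ∀ u w, G.Adj u w → c u ≠ c w)
    (hacyc : ¬ HasDCycle (fun a b => G.Adj a b ∧ c b = c a + 1))
    (r : V) (hr : ∀ y, ¬ (G.Adj r y ∧ c y = c r + 1))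
    (hru : ∀ x, (∀ y, ¬ (G.Adj x y ∧ c y = c x + 1)) → x = r) :
    (∀ (x : V) (i : ℕ), χ ≤ i →
        InLevel (fun a b => G.Adj a b ∧ c b = c a + 1) x i →
        ∃ l : List V, l.Chain' (fun a b => G.Adj a b ∧ c b = c a + 1) ∧
          l.head? = some x ∧ l.length = χ) ∧
    (∀ x : V,
        (¬ ∃ (y : V) (p : G.Walk x y), p.support.length = χ ∧
            (p.support.map c).Nodup) →
        ∀ i : ℕ, InLevel (fun a b => G.Adj a b ∧ c b = c a + 1) x i →
          2 ≤ i ∧ i ≤ χ - 1) := by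
  classical
  set D : V → V → Prop := fun a b => G.Adj a b ∧ c b = c a + 1 with hDdef
  have hne : Nonempty V := ⟨r⟩
  have hχpos : 0 < χ := by
    have h1 := SimpleGraph.chromaticNumber_pos (G := G) G.colorable_of_fintype
    rw [hχ] at h1
    exact_mod_cast h1
  have hDadj : ∀ a b, D a b → G.Adj a b := fun a b h => h.1
  have hDc : ∀ a b, D a b → c b = c a + 1 := fun a b h => h.2
  have hnodup := aux_nodup (D := D) hacyc
  have cf_bound : ∀ (x : V) (n : ℕ),
      (∃ l : List V, l.Chain' D ∧ l.head? = some x ∧ l.length = n) → n ≤ Fintype.card V := by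
    rintro x n ⟨l, hl, -, rfl⟩
    exact (hnodup l hl).length_le_card
  have cf_one : ∀ x : V, ∃ l : List V, l.Chain' D ∧ l.head? = some x ∧ l.length = 1 :=
    fun x => ⟨[x], List.isChain_singleton x, rfl, rfl⟩
  have cf_mono : ∀ (x : V) (n m : ℕ),
      (∃ l : List V, l.Chain' D ∧ l.head? = some x ∧ l.length = n) → 0 < m → m ≤ n →
      (∃ l : List V, l.Chain' D ∧ l.head? = some x ∧ l.length = m) := by
    rintro x n m ⟨l, hl, hh, rfl⟩ hm hmn
    refine ⟨l.take m, hl.take m, ?_, by rw [List.length_take]; omega⟩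
    cases l with
    | nil => simp at hh
    | cons a t =>
      cases m with
      | zero => omega
      | succ k => simpa using hh
  have lev_max : ∀ (x : V) (n : ℕ),
      (∃ l : List V, l.Chain' D ∧ l.head? = some x ∧ l.length = n) → n ≤ lev D x :=
    fun x n h => Nat.le_findGreatest (cf_bound x n h) h
  have lev_pos : ∀ x : V, 1 ≤ lev D x := fun x => lev_max x 1 (cf_one x)
  have lev_cf : ∀ x : V, ∃ l : List V, l.Chain' D ∧ l.head? = some x ∧ l.length = lev D x :=
    fun x => Nat.findGreatest_spec (P := fun n =>
      ∃ l : List V, l.Chain' D ∧ l.head? = some x ∧ l.length = n)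
      (cf_bound x 1 (cf_one x)) (cf_one x)
  have lev_not : ∀ x : V,
      ¬ (∃ l : List V, l.Chain' D ∧ l.head? = some x ∧ l.length = lev D x + 1) := by
    intro x h
    have := lev_max x _ h
    omega
  have inlevel_lev : ∀ (x : V) (i : ℕ), InLevel D x i → i = lev D x := by
    intro x i hIL
    obtain ⟨h1, h2⟩ := hIL
    have hi : i ≤ lev D x := lev_max x i h1
    rcases eq_or_lt_of_le hi with h | h
    · exact h
    · exact absurd (cf_mono x (lev D x) (i + 1) (lev_cf x) (by omega) (by omega)) h2
  have ends_r : ∀ x : V, ∃ l : List V,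
      l.Chain' D ∧ l.head? = some x ∧ l.length = lev D x ∧ l.getLast? = some r := by
    intro x
    obtain ⟨l, hl, hh, hlen⟩ := lev_cf x
    have hlne : l ≠ [] := by rintro rfl; simp at hh
    refine ⟨l, hl, hh, hlen, ?_⟩
    have hz : l.getLast hlne = r := by
      apply hru
      intro y hy
      apply lev_not x
      refine ⟨l ++ [y], ?_, ?_, by simp [hlen]⟩
      · refine hl.append (List.isChain_singleton y) ?_
        intro a ha b hb
        simp only [List.head?_cons, Option.mem_def, Option.some.injEq] at hb
        subst hb
        have : a = l.getLast hlne := by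
          rw [List.getLast?_eq_getLast hlne] at ha
          simpa using ha.symm
        rw [this]
        exact hy
      · rw [List.head?_append_of_ne_nil _ hlne]
        exact hh
    rw [List.getLast?_eq_getLast hlne, hz]
  have colorful_of : ∀ (x : V) (l : List V) (R : V → V → Prop), (∀ a b, R a b → G.Adj a b) →
      l.Chain' R → l.head? = some x → l.length = χ → (l.map c).Nodup →
      ∃ (y : V) (p : G.Walk x y), p.support.length = χ ∧ (p.support.map c).Nodup := by
    intro x l R hR hch hh hlen hnd
    obtain ⟨y, p, hp⟩ := aux_walk hR l x hch hh
    exact ⟨y, p, by rw [hp]; exact hlen, by rw [hp]; exact hnd⟩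
  have colorful_of_D : ∀ (x : V) (l : List V), l.Chain' D → l.head? = some x → l.length = χ →
      ∃ (y : V) (p : G.Walk x y), p.support.length = χ ∧ (p.support.map c).Nodup :=
    fun x l h hh hl => colorful_of x l D hDadj h hh hl (aux_mapnodup hχpos hDc h hl)
  have part1 : ∀ (x : V) (i : ℕ), χ ≤ i → InLevel D x i →
      ∃ l : List V, l.Chain' D ∧ l.head? = some x ∧ l.length = χ := by
    intro x i hi hIL
    obtain ⟨h1, -⟩ := hIL
    exact cf_mono x i χ h1 hχpos hi
  have hkey : ∃ l : List V, l.Chain' D ∧ l.length = χ ∧ l.getLast? = some r := by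
    by_cases H : ∃ x : V, χ ≤ lev D x
    · obtain ⟨x, hx⟩ := H
      obtain ⟨l, hl, hh, hlen, hlast⟩ := ends_r x
      have hlendrop : (l.drop (lev D x - χ)).length = χ := by rw [List.length_drop]; omega
      refine ⟨l.drop (lev D x - χ), hl.drop _, hlendrop, ?_⟩
      have hnedrop : l.drop (lev D x - χ) ≠ [] := by
        intro h
        rw [h] at hlendrop
        simp at hlendrop
        omega
      calc (l.drop (lev D x - χ)).getLast?
          = (l.take (lev D x - χ) ++ l.drop (lev D x - χ)).getLast? := by
            rw [List.getLast?_append_of_ne_nil _ hnedrop]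
        _ = l.getLast? := by rw [List.take_append_drop]
        _ = some r := hlast
    · push_neg at H
      exfalso
      have hcol : G.Colorable (χ - 1) := by
        refine ⟨SimpleGraph.Coloring.mk
          (fun x => (⟨lev D x - 1, by have := lev_pos x; have := H x; omega⟩ : Fin (χ - 1))) ?_⟩
        intro u v huv hEq
        have h1 := lev_pos u
        have h2 := lev_pos v
        have hluv : lev D u = lev D v := by
          have := Fin.mk.injEq (lev D u - 1) _ (lev D v - 1) _ ▸ hEq
          simp only [Fin.mk.injEq] at hEq
          omega
        obtain ⟨l, hl, hh, hlen, hlast⟩ := ends_r u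
        obtain ⟨m, hm, hmh, hmlen, hmlast⟩ := ends_r v
        have e1 : c r = c u + ((lev D u - 1 : ℕ) : ZMod χ) := by
          have := aux_last hDc l hl u r hh hlast
          rwa [hlen] at this
        have e2 : c r = c v + ((lev D v - 1 : ℕ) : ZMod χ) := by
          have := aux_last hDc m hm v r hmh hmlast
          rwa [hmlen] at this
        have : c u = c v := by
          rw [hluv] at e1
          exact add_right_cancel (e1.symm.trans e2)
        exact hc u v huv this
      have hle := hcol.chromaticNumber_le
      rw [hχ] at hle
      have : χ ≤ χ - 1 := by exact_mod_cast hle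
      omega
  have hrcol : ∃ (y : V) (p : G.Walk r y), p.support.length = χ ∧ (p.support.map c).Nodup := by
    obtain ⟨l, hl, hlen, hlast⟩ := hkey
    have hrev : l.reverse.Chain' (flip D) := List.isChain_reverse.2 hl
    have hh : l.reverse.head? = some r := by
      rw [← List.getLast?_eq_head?_reverse]
      exact hlast
    refine colorful_of r l.reverse (flip D) (fun a b h => (hDadj b a h).symm) hrev hh
      (by simp [hlen]) ?_
    have hnd := aux_mapnodup hχpos hDc hl hlen
    rw [List.map_reverse, List.nodup_reverse]
    exact hnd
  refine ⟨part1, ?_⟩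
  intro x hx i hIL
  rcases Nat.lt_or_ge χ 2 with hχ2 | hχ2
  · exfalso
    apply hx
    have hχ1 : χ = 1 := by omega
    subst hχ1
    exact ⟨x, SimpleGraph.Walk.nil, by simp, by simp⟩
  · have hieq : i = lev D x := inlevel_lev x i hIL
    constructor
    · by_contra h
      push_neg at h
      have hi1 : lev D x = 1 := by have := lev_pos x; omega
      have hsink : ∀ y, ¬ D x y := by
        intro y hy
        apply lev_not x
        rw [hi1]
        exact ⟨[x, y], List.isChain_pair.2 hy, rfl, rfl⟩
      have hxr : x = r := hru x hsink
      subst hxr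
      exact hx hrcol
    · by_contra h
      push_neg at h
      have hge : χ ≤ i := by omega
      obtain ⟨l, hl, hh, hlen⟩ := part1 x i hge hIL
      exact hx (colorful_of_D x l hl hh hlen)
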